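/- arXiv:2106.07263 — 2 statements merged into one kernel-verified Lean document; each statement's English description precedes it below -/
import Mathlib

section
/- For any fixed measurable function g: ℝ^d → ℝ with E[g(X)²] < ∞ and E[Y²] < ∞ such that E[Z(g)Z(g)ᵀ] is invertible, the population OLS coefficient β(g) := (E[Z(g)Z(g)ᵀ])⁻¹ E[Z(g) Y] satisfies α₁ = β₁(g) + β₃(g)·E[g(X)], where α₁ := E[Y | T=1] − E[Y | T=0] is the average treatment effect and β₁(g), β₃(g) are the entries of β(g) corresponding to the regressors T and T·g(X). That is, regardless of the adjustment covariate g, the coefficient on T plus the interaction coefficient times the mean of g(X) equals the ATE. -/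
open MeasureTheory ProbabilityTheory Filter Matrix
open scoped ENNReal NNReal Topology

noncomputable section

/-- The regression vector `Z(g) = (1, t, g(x), t·g(x))ᵀ` evaluated at `(x, t)`. -/
def Zvec {d : ℕ} (g : (Fin d → ℝ) → ℝ) (x : Fin d → ℝ) (t : ℝ) : Fin 4 → ℝ :=
  ![1, t, g x, t * g x]

/-- The outer product `Z(g) Z(g)ᵀ`. -/
def Zouter {d : ℕ} (g : (Fin d → ℝ) → ℝ) (x : Fin d → ℝ) (t : ℝ) :
    Matrix (Fin 4) (Fin 4) ℝ :=
  vecMulVec (Zvec g x t) (Zvec g x t)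

/-- Euclidean norm of a vector in `ℝ^m`. -/
def vecNorm {m : ℕ} (v : Fin m → ℝ) : ℝ := Real.sqrt (∑ i, v i ^ 2)

/-- The `ℓ² → ℓ²` operator norm of a square matrix. -/
def opNorm {m : ℕ} (M : Matrix (Fin m) (Fin m) ℝ) : ℝ :=
  ‖Matrix.toEuclideanCLM (𝕜 := ℝ) M‖

/-- The minimum eigenvalue of a (symmetric) matrix, via the Rayleigh quotient. -/
def lambdaMin {m : ℕ} (M : Matrix (Fin m) (Fin m) ℝ) : ℝ :=
  sInf {r | ∃ v : Fin m → ℝ, ∑ i, v i ^ 2 = 1 ∧ r = v ⬝ᵥ (M *ᵥ v)}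

variable {Ω : Type*} [MeasurableSpace Ω]

/-- Population Gram matrix `P[Z(g)Z(g)ᵀ]` (entrywise integral). -/
def popGram {d : ℕ} (μ : Measure Ω) (X : Ω → Fin d → ℝ) (T : Ω → ℝ)
    (g : (Fin d → ℝ) → ℝ) : Matrix (Fin 4) (Fin 4) ℝ :=
  Matrix.of fun i j => ∫ ω, Zvec g (X ω) (T ω) i * Zvec g (X ω) (T ω) j ∂μ

/-- Population cross moment `P[Z(g)·Y]` (entrywise integral). -/
def popZY {d : ℕ} (μ : Measure Ω) (Y : Ω → ℝ) (X : Ω → Fin d → ℝ) (T : Ω → ℝ)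
    (g : (Fin d → ℝ) → ℝ) : Fin 4 → ℝ :=
  fun i => ∫ ω, Zvec g (X ω) (T ω) i * Y ω ∂μ

/-- The population OLS coefficient `β(g) = (P[Z(g)Z(g)ᵀ])⁻¹ P[Z(g)Y]`. -/
def betaPop {d : ℕ} (μ : Measure Ω) (Y : Ω → ℝ) (X : Ω → Fin d → ℝ) (T : Ω → ℝ)
    (g : (Fin d → ℝ) → ℝ) : Fin 4 → ℝ :=
  (popGram μ X T g)⁻¹ *ᵥ popZY μ Y X T g

/-- The average treatment effect `α₁ = E[Y | T = 1] − E[Y | T = 0]`. -/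
def ATE (μ : Measure Ω) (Y : Ω → ℝ) (T : Ω → ℝ) : ℝ :=
  (∫ ω, Y ω ∂μ[|{ω | T ω = 1}]) - (∫ ω, Y ω ∂μ[|{ω | T ω = 0}])

/-- The asymptotic variance
`σ² = σ²_{Y_C}/(1−p) + σ²_{Y_T}/p − (σ²_g/(p(1−p)))·[β₂ p + (β₂+β₃)(1−p)]²`. -/
def sigmaSq {d : ℕ} (μ : Measure Ω) (Y : Ω → ℝ) (X : Ω → Fin d → ℝ) (T : Ω → ℝ)
    (g₀ : (Fin d → ℝ) → ℝ) (p : ℝ) : ℝ :=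
  variance Y (μ[|{ω | T ω = 0}]) / (1 - p) + variance Y (μ[|{ω | T ω = 1}]) / p
    - variance (fun ω => g₀ (X ω)) μ / (p * (1 - p)) *
      (betaPop μ Y X T g₀ 2 * p
        + (betaPop μ Y X T g₀ 2 + betaPop μ Y X T g₀ 3) * (1 - p)) ^ 2

/-- For any fixed square-integrable adjustment covariate `g`, the population OLS
coefficient `β(g) = (E[Z(g)Z(g)ᵀ])⁻¹ E[Z(g)Y]` of the fully interacted regression
satisfies `α₁ = β₁(g) + β₃(g)·E[g(X)]`: the coefficient on `T` plus the
interaction coefficient times the mean of `g(X)` equals the ATE, regardless of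
the adjustment covariate. -/
theorem mlrate_ate_identity {Ω : Type*} [MeasurableSpace Ω] {d : ℕ}
    (μ : Measure Ω) [IsProbabilityMeasure μ]
    (Y : Ω → ℝ) (X : Ω → Fin d → ℝ) (T : Ω → ℝ)
    (hY : Measurable Y) (hX : Measurable X) (hT : Measurable T)
    (hTbin : ∀ ω, T ω = 0 ∨ T ω = 1)
    (hp0 : 0 < μ {ω | T ω = 1}) (hp1 : μ {ω | T ω = 1} < 1)
    (hTX : IndepFun T X μ)
    (g : (Fin d → ℝ) → ℝ) (hg : Measurable g)
    (hgL2 : MemLp (fun ω => g (X ω)) 2 μ)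
    (hYL2 : MemLp Y 2 μ)
    (hGram : IsUnit (popGram μ X T g)) :
    ATE μ Y T = betaPop μ Y X T g 1 + betaPop μ Y X T g 3 * ∫ ω, g (X ω) ∂μ := by

  classical
  have hs1 : MeasurableSet {ω | T ω = 1} := hT (measurableSet_singleton 1)
  have hs0 : MeasurableSet {ω | T ω = 0} := hT (measurableSet_singleton 0)
  set p : ℝ := (μ {ω | T ω = 1}).toReal with hpdef
  have hμtop : μ {ω | T ω = 1} ≠ ⊤ := measure_ne_top μ _
  have hppos : 0 < p := ENNReal.toReal_pos hp0.ne' hμtop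
  have hplt : p < 1 := by
    have := (ENNReal.toReal_lt_toReal hμtop (by norm_num : (1:ℝ≥0∞) ≠ ⊤)).mpr hp1
    simpa using this
  have hp' : p ≠ 0 := hppos.ne'
  have h1p : (0:ℝ) < 1 - p := by linarith
  have h1p' : (1:ℝ) - p ≠ 0 := h1p.ne'
  -- integrability
  have hGint : Integrable (fun ω => g (X ω)) μ := hgL2.integrable one_le_two
  have hYint : Integrable Y μ := hYL2.integrable one_le_two
  have hTbdd : ∃ C, ∀ ω, ‖T ω‖ ≤ C := by
    refine ⟨1, fun ω => ?_⟩
    rcases hTbin ω with h | h <;> simp [h]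
  have hTY : Integrable (fun ω => T ω * Y ω) μ :=
    hYint.bdd_mul hT.aestronglyMeasurable (ae_of_all _ hTbdd.choose_spec)
  have hTint : Integrable T μ := by
    have h1' : Integrable (fun _ : Ω => (1:ℝ)) μ := integrable_const 1
    simpa using h1'.bdd_mul hT.aestronglyMeasurable (ae_of_all _ hTbdd.choose_spec)
  -- T as indicator facts
  have hTmul : ∀ f : Ω → ℝ, ∀ ω, T ω * f ω = Set.indicator {ω | T ω = 1} f ω := by
    intro f ω
    rcases hTbin ω with h | h <;> simp [Set.indicator_apply, h]
  -- ∫ T = p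
  have hET : (∫ ω, T ω ∂μ) = p := by
    have h : (fun ω => T ω) = Set.indicator {ω | T ω = 1} (fun _ => (1:ℝ)) := by
      funext ω
      rw [← hTmul (fun _ => (1:ℝ)) ω, mul_one]
    rw [h, integral_indicator hs1]
    simp [hpdef, measureReal_def]
  -- ∫ T*T = p
  have hETT : (∫ ω, T ω * T ω ∂μ) = p := by
    have h : (fun ω => T ω * T ω) = fun ω => T ω := by
      funext ω; rcases hTbin ω with h | h <;> simp [h]
    rw [h, hET]
  -- ∫ T*g = p * ∫ g  (independence)
  have hind : IndepFun T (fun ω => g (X ω)) μ := hTX.comp measurable_id hg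
  have hETG : (∫ ω, T ω * g (X ω) ∂μ) = p * ∫ ω, g (X ω) ∂μ := by
    have h := hind.integral_mul_eq_mul_integral hTint.aestronglyMeasurable hGint.aestronglyMeasurable
    rw [show (T * fun ω => g (X ω)) = fun ω => T ω * g (X ω) from rfl] at h
    rw [h, hET]
  have hETTG : (∫ ω, T ω * (T ω * g (X ω)) ∂μ) = p * ∫ ω, g (X ω) ∂μ := by
    have h : (fun ω => T ω * (T ω * g (X ω))) = fun ω => T ω * g (X ω) := by
      funext ω; rcases hTbin ω with h | h <;> simp [h]
    rw [h, hETG]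
  -- conditional expectations
  have hcond1 : (∫ ω, Y ω ∂μ[|{ω | T ω = 1}]) = (∫ ω, T ω * Y ω ∂μ) / p := by
    rw [ProbabilityTheory.cond, integral_smul_measure]
    have h : (∫ ω, T ω * Y ω ∂μ) = ∫ ω in {ω | T ω = 1}, Y ω ∂μ := by
      rw [show (fun ω => T ω * Y ω) = Set.indicator {ω | T ω = 1} Y from
        funext fun ω => hTmul Y ω, integral_indicator hs1]
    rw [h]
    simp [ENNReal.toReal_inv, div_eq_inv_mul, hpdef]
  have hs0c : {ω | T ω = 0} = {ω | T ω = 1}ᶜ := by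
    ext ω; rcases hTbin ω with h | h <;> simp [h]
  have hμ0 : (μ {ω | T ω = 0}).toReal = 1 - p := by
    rw [hs0c, prob_compl_eq_one_sub hs1,
      ENNReal.toReal_sub_of_le prob_le_one (by norm_num)]
    simp [hpdef]
  have hcond0 : (∫ ω, Y ω ∂μ[|{ω | T ω = 0}]) =
      ((∫ ω, Y ω ∂μ) - ∫ ω, T ω * Y ω ∂μ) / (1 - p) := by
    rw [ProbabilityTheory.cond, integral_smul_measure]
    have h : (∫ ω, Y ω ∂μ) - (∫ ω, T ω * Y ω ∂μ) = ∫ ω in {ω | T ω = 0}, Y ω ∂μ := by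
      have h2 : (fun ω => Y ω - T ω * Y ω) = Set.indicator {ω | T ω = 0} Y := by
        funext ω
        rcases hTbin ω with h | h <;> simp [Set.indicator_apply, h]
      rw [← integral_sub hYint hTY, h2, integral_indicator hs0]
    rw [h]
    rw [ENNReal.toReal_inv, hμ0]
    rw [smul_eq_mul, div_eq_inv_mul]
  -- normal equations
  have hdet : IsUnit (popGram μ X T g).det := (Matrix.isUnit_iff_isUnit_det _).mp hGram
  have hsolve : popGram μ X T g *ᵥ betaPop μ Y X T g = popZY μ Y X T g := by
    rw [betaPop, Matrix.mulVec_mulVec, Matrix.mul_nonsing_inv _ hdet, Matrix.one_mulVec]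
  have h0 := congrFun hsolve 0
  have h1 := congrFun hsolve 1
  simp only [popGram, popZY, Zvec, Matrix.mulVec, dotProduct, Fin.sum_univ_four,
    Matrix.of_apply, Matrix.cons_val_zero, Matrix.cons_val_one, Matrix.head_cons,
    Matrix.cons_val_two, Matrix.tail_cons, Matrix.cons_val_three, Matrix.head_fin_const,
    one_mul, mul_one] at h0 h1
  rw [integral_const, probReal_univ] at h0
  rw [hET, hETG] at h0 h1
  rw [hETT, hETTG] at h1
  simp only [ENNReal.toReal_one, smul_eq_mul, one_mul] at h0
  -- finish
  rw [ATE, hcond1, hcond0]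
  field_simp
  linear_combination p * h0 - h1
end
end

section
/- Suppose E[g₀(X)²] < ∞, E[Y²] < ∞, 0 < Var(g₀(X)), 0 < Var(Y), E[Z(g₀)Z(g₀)ᵀ] is invertible, β_{0,3} = 0 (the population interaction coefficient vanishes), Var(Y | T=0) = Var(Y | T=1), and E[Y | T=1] = E[Y | T=0]. Then the ratio of the asymptotic variance of the regression-adjusted estimator to that of the difference-in-means estimator satisfies σ² / [Var(Y|T=0)/(1−p) + Var(Y|T=1)/p] = 1 − Corr(Y, g₀(X))², where Corr denotes the Pearson correlation coefficient. (The relative-efficiency calculation stated after the Corollary.) -/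
open MeasureTheory ProbabilityTheory Filter Matrix
open scoped ENNReal NNReal Topology

noncomputable section

variable {Ω : Type*} [MeasurableSpace Ω]

/-- Covariance `Cov(f, g) = E[(f − E f)(g − E g)]`. -/
def covar {Ω : Type*} [MeasurableSpace Ω] (μ : Measure Ω) (f g : Ω → ℝ) : ℝ :=
  ∫ ω, (f ω - ∫ ω', f ω' ∂μ) * (g ω - ∫ ω', g ω' ∂μ) ∂μ

/-- Pearson correlation `Corr(f, g) = Cov(f,g)/(√Var f · √Var g)`. -/
def corr {Ω : Type*} [MeasurableSpace Ω] (μ : Measure Ω) (f g : Ω → ℝ) : ℝ :=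
  covar μ f g / (Real.sqrt (variance f μ) * Real.sqrt (variance g μ))

lemma integrable_mul_of_memL2 {μ : Measure Ω} {f g : Ω → ℝ}
    (hf : MemLp f 2 μ) (hg : MemLp g 2 μ) : Integrable (fun ω => f ω * g ω) μ := by
  have h : MemLp (f • g) 1 μ := hg.smul hf
    (hpqr := ⟨by simp [one_div, ENNReal.inv_two_add_inv_two]⟩)
  exact memLp_one_iff_integrable.mp h

/-- **Relative efficiency.** If the population interaction coefficient vanishes
(`β₀₃ = 0`), the conditional variances of `Y` in test and control coincide, and
`E[Y|T=1] = E[Y|T=0]`, then the ratio of the asymptotic variance `σ²` of the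
regression-adjusted estimator to that of the difference-in-means estimator is
`1 − Corr(Y, g₀(X))²`. -/
theorem mlrate_relative_efficiency {Ω : Type*} [MeasurableSpace Ω] {d : ℕ}
    (μ : Measure Ω) [IsProbabilityMeasure μ]
    (Y : Ω → ℝ) (X : Ω → Fin d → ℝ) (T : Ω → ℝ)
    (hY : Measurable Y) (hX : Measurable X) (hT : Measurable T)
    (hTbin : ∀ ω, T ω = 0 ∨ T ω = 1)
    (p : ℝ) (hp0 : 0 < p) (hp1 : p < 1)
    (hp : μ {ω | T ω = 1} = ENNReal.ofReal p)
    (hTX : IndepFun T X μ)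
    (g₀ : (Fin d → ℝ) → ℝ) (hg₀ : Measurable g₀)
    (hg₀L2 : MemLp (fun ω => g₀ (X ω)) 2 μ)
    (hYL2 : MemLp Y 2 μ)
    (hvarg : 0 < variance (fun ω => g₀ (X ω)) μ)
    (hvarY : 0 < variance Y μ)
    (hGram : IsUnit (popGram μ X T g₀))
    (hbeta3 : betaPop μ Y X T g₀ 3 = 0)
    (hvarEq : variance Y (μ[|{ω | T ω = 0}]) = variance Y (μ[|{ω | T ω = 1}]))
    (hmeanEq : (∫ ω, Y ω ∂μ[|{ω | T ω = 1}]) = ∫ ω, Y ω ∂μ[|{ω | T ω = 0}]) :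
    sigmaSq μ Y X T g₀ p /
        (variance Y (μ[|{ω | T ω = 0}]) / (1 - p)
          + variance Y (μ[|{ω | T ω = 1}]) / p)
      = 1 - corr μ Y (fun ω => g₀ (X ω)) ^ 2 := by
  have hq0 : (0:ℝ) < 1 - p := by linarith
  set A : Set Ω := {ω | T ω = 1} with hA
  set B : Set Ω := {ω | T ω = 0} with hB
  have hmA : MeasurableSet A := hT (measurableSet_singleton 1)
  have hBA : B = Aᶜ := by
    ext ω; rcases hTbin ω with h | h <;> simp [hA, hB, h]
  have hμB : μ B = ENNReal.ofReal (1 - p) := by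
    rw [hBA, prob_compl_eq_one_sub hmA, hp, ← ENNReal.ofReal_one,
      ← ENNReal.ofReal_sub _ hp0.le]
  -- basic integrability
  have hgint : Integrable (fun ω => g₀ (X ω)) μ := hg₀L2.integrable one_le_two
  have hYint : Integrable Y μ := hYL2.integrable one_le_two
  have hY2int : Integrable (fun ω => Y ω ^ 2) μ := hYL2.integrable_sq
  have hTind : ∀ ω, T ω = A.indicator (fun _ => (1:ℝ)) ω := by
    intro ω
    rcases hTbin ω with h | h <;> simp [Set.indicator_apply, hA, h]
  have hTint : Integrable T μ := by
    rw [funext hTind]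
    exact (integrable_const (1:ℝ)).indicator hmA
  have hIT : ∫ ω, T ω ∂μ = p := by
    rw [funext hTind, integral_indicator_const _ hmA, measureReal_def, hp, smul_eq_mul, mul_one,
      ENNReal.toReal_ofReal hp0.le]
  have hTg_indep : IndepFun T (fun ω => g₀ (X ω)) μ := hTX.comp measurable_id hg₀
  have hgYint : Integrable (fun ω => g₀ (X ω) * Y ω) μ := integrable_mul_of_memL2 hg₀L2 hYL2
  -- abbreviations
  set m : ℝ := ∫ ω, g₀ (X ω) ∂μ with hm
  set iY : ℝ := ∫ ω, Y ω ∂μ with hiY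
  set igY : ℝ := ∫ ω, g₀ (X ω) * Y ω ∂μ with higY
  set b2 : ℝ := betaPop μ Y X T g₀ 2 with hb2
  set vg : ℝ := variance (fun ω => g₀ (X ω)) μ with hvg
  -- Gram row equations
  have hGb : popGram μ X T g₀ *ᵥ betaPop μ Y X T g₀ = popZY μ Y X T g₀ := by
    unfold betaPop
    rw [Matrix.mulVec_mulVec,
      Matrix.mul_nonsing_inv _ ((Matrix.isUnit_iff_isUnit_det _).mp hGram),
      Matrix.one_mulVec]
  have h0 := congrFun hGb 0
  have h2 := congrFun hGb 2
  simp only [Matrix.mulVec, dotProduct, Fin.sum_univ_four, popGram, popZY,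
    Matrix.of_apply, Zvec, Matrix.cons_val_zero, Matrix.cons_val_one, Matrix.head_cons,
    Matrix.cons_val_two, Matrix.tail_cons, Matrix.cons_val_three, one_mul, hbeta3,
    mul_zero, add_zero] at h0 h2
  have hone : ∫ (_ : Ω), (1:ℝ) ∂μ = 1 := by simp
  have hgT : ∫ ω, g₀ (X ω) * T ω ∂μ = m * p := by
    have h : ∫ ω, g₀ (X ω) * T ω ∂μ
        = (∫ ω, g₀ (X ω) ∂μ) * ∫ ω, T ω ∂μ :=
      hTg_indep.symm.integral_fun_mul_eq_mul_integral hgint.aestronglyMeasurable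
        hTint.aestronglyMeasurable
    rw [h, hIT]
  have hg1 : ∫ ω, g₀ (X ω) * (1:ℝ) ∂μ = m := by simp [hm]
  rw [hone, one_mul, hIT] at h0
  rw [hg1, hgT] at h2
  -- variance of g as moments
  have hvg_mom : vg = (∫ ω, g₀ (X ω) * g₀ (X ω) ∂μ) - m ^ 2 := by
    rw [hvg, variance_eq_sub hg₀L2]
    congr 1
    · exact integral_congr_ae (Eventually.of_forall fun ω => by simp [pow_two])
  -- key: vg * b2 = Cov(Y, g)
  have hkey : vg * b2 = igY - m * iY := by
    rw [hvg_mom]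
    linear_combination h2 - m * h0
  -- covariance expansion
  have hcov : covar μ Y (fun ω => g₀ (X ω)) = igY - m * iY := by
    unfold covar
    have hexp : ∀ ω, (Y ω - iY) * (g₀ (X ω) - m)
        = g₀ (X ω) * Y ω - m * Y ω - (iY * g₀ (X ω) - iY * m) := by
      intro ω; ring
    rw [integral_congr_ae (Eventually.of_forall hexp)]
    have i1 : Integrable (fun ω => g₀ (X ω) * Y ω - m * Y ω) μ :=
      hgYint.sub (hYint.const_mul m)
    have i2 : Integrable (fun ω => iY * g₀ (X ω) - iY * m) μ :=
      (hgint.const_mul iY).sub (integrable_const _)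
    have e1 : ∫ ω, (g₀ (X ω) * Y ω - m * Y ω - (iY * g₀ (X ω) - iY * m)) ∂μ
        = (∫ ω, (g₀ (X ω) * Y ω - m * Y ω) ∂μ)
          - ∫ ω, (iY * g₀ (X ω) - iY * m) ∂μ := integral_sub i1 i2
    have e2 : ∫ ω, (g₀ (X ω) * Y ω - m * Y ω) ∂μ = igY - m * iY := by
      rw [integral_sub hgYint (hYint.const_mul m), integral_const_mul]
    have e3 : ∫ ω, (iY * g₀ (X ω) - iY * m) ∂μ = 0 := by
      rw [integral_sub (hgint.const_mul iY) (integrable_const _),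
        integral_const_mul, integral_const]
      simp [hm]
    rw [e1, e2, e3]
    ring
  -- conditional measure machinery
  have hμA0 : μ A ≠ 0 := by rw [hp]; simp [hp0]
  have hμB0 : μ B ≠ 0 := by rw [hμB]; simp [hp1]
  haveI hprobA : IsProbabilityMeasure (μ[|A]) := cond_isProbabilityMeasure hμA0
  haveI hprobB : IsProbabilityMeasure (μ[|B]) := cond_isProbabilityMeasure hμB0
  have hcondA : ∀ f : Ω → ℝ, ∫ ω, f ω ∂(μ[|A]) = p⁻¹ * ∫ ω in A, f ω ∂μ := by
    intro f
    rw [ProbabilityTheory.cond, integral_smul_measure, hp, ENNReal.toReal_inv,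
      ENNReal.toReal_ofReal hp0.le, smul_eq_mul]
  have hcondB : ∀ f : Ω → ℝ, ∫ ω, f ω ∂(μ[|B]) = (1-p)⁻¹ * ∫ ω in B, f ω ∂μ := by
    intro f
    rw [ProbabilityTheory.cond, integral_smul_measure, hμB, ENNReal.toReal_inv,
      ENNReal.toReal_ofReal hq0.le, smul_eq_mul]
  have hYL2A : MemLp Y 2 (μ[|A]) :=
    (hYL2.restrict A).smul_measure (ENNReal.inv_ne_top.mpr hμA0)
  have hYL2B : MemLp Y 2 (μ[|B]) :=
    (hYL2.restrict B).smul_measure (ENNReal.inv_ne_top.mpr hμB0)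
  set IA : ℝ := ∫ ω in A, Y ω ∂μ with hIA
  set IB : ℝ := ∫ ω in B, Y ω ∂μ with hIB
  set IA2 : ℝ := ∫ ω in A, Y ω ^ 2 ∂μ with hIA2
  set IB2 : ℝ := ∫ ω in B, Y ω ^ 2 ∂μ with hIB2
  have htotY : iY = IA + IB := by
    rw [hiY, hIA, hIB, hBA, ← integral_add_compl hmA hYint]
  have htotY2 : ∫ ω, Y ω ^ 2 ∂μ = IA2 + IB2 := by
    rw [hIA2, hIB2, hBA, ← integral_add_compl hmA hY2int]
  have hvarA : variance Y (μ[|A]) = p⁻¹ * IA2 - (p⁻¹ * IA) ^ 2 := by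
    rw [variance_eq_sub hYL2A]
    congr 1
    · rw [show (μ[|A])[Y ^ 2] = ∫ ω, Y ω ^ 2 ∂(μ[|A]) from rfl, hcondA]
    · rw [show (μ[|A])[Y] = ∫ ω, Y ω ∂(μ[|A]) from rfl, hcondA]
  have hvarB : variance Y (μ[|B]) = (1-p)⁻¹ * IB2 - ((1-p)⁻¹ * IB) ^ 2 := by
    rw [variance_eq_sub hYL2B]
    congr 1
    · rw [show (μ[|B])[Y ^ 2] = ∫ ω, Y ω ^ 2 ∂(μ[|B]) from rfl, hcondB]
    · rw [show (μ[|B])[Y] = ∫ ω, Y ω ∂(μ[|B]) from rfl, hcondB]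
  have hvarY_mom : variance Y μ = (IA2 + IB2) - iY ^ 2 := by
    rw [variance_eq_sub hYL2, ← htotY2]
    rfl
  have hmean' : p⁻¹ * IA = (1-p)⁻¹ * IB := by
    have h1 := hcondA Y
    have h2 := hcondB Y
    rw [← hIA] at h1; rw [← hIB] at h2
    rw [← h1, ← h2]
    exact hmeanEq
  -- variance decomposition: Var Y = p * varA + (1-p) * varB
  set mubar : ℝ := p⁻¹ * IA with hmubar
  have hIAeq : IA = p * mubar := by
    rw [hmubar]; field_simp
  have hIBeq : IB = (1-p) * mubar := by
    have h : mubar * (1 - p) = IB := by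
      rw [hmean']; field_simp
    linarith
  have hdecomp : variance Y μ = p * variance Y (μ[|A]) + (1-p) * variance Y (μ[|B]) := by
    rw [hvarY_mom, hvarA, hvarB, htotY, hIAeq, hIBeq]
    field_simp
    ring
  -- identify v
  set v : ℝ := variance Y (μ[|B]) with hv
  have hvAB : variance Y (μ[|A]) = v := (hvarEq).symm
  have hvy_v : variance Y μ = v := by
    rw [hdecomp, hvAB]; ring
  have hv0 : 0 < v := by rw [← hvy_v]; exact hvarY
  -- correlation squared
  have hcorr_sq : corr μ Y (fun ω => g₀ (X ω)) ^ 2 = vg * b2 ^ 2 / v := by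
    unfold corr
    rw [hcov, ← hkey, div_pow]
    have hden : (Real.sqrt (variance Y μ)
        * Real.sqrt (variance (fun ω => g₀ (X ω)) μ)) ^ 2 = v * vg := by
      rw [mul_pow, Real.sq_sqrt (variance_nonneg _ _),
        Real.sq_sqrt (variance_nonneg _ _), hvy_v, ← hvg]
    rw [hden, mul_pow]
    rw [div_eq_div_iff (by positivity) (ne_of_gt hv0)]
    ring
  -- final computation
  have hvg0 : vg ≠ 0 := ne_of_gt hvarg
  rw [hcorr_sq]
  unfold sigmaSq
  rw [← hA, ← hB, ← hb2, hbeta3, ← hvg, hvAB, ← hv]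
  have hpne : p ≠ 0 := ne_of_gt hp0
  have hqne : (1:ℝ) - p ≠ 0 := ne_of_gt hq0
  field_simp
  ring
end
end
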